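/- Let (G, +) be a commutative groupoid and let M and M' be multisets of cardinality 3 over G. Then deck M = deck M' if and only if one of the following holds: (i) M = M'; (ii) M = ⟨r, s, t⟩ and M' = ⟨r, r + s, r + t⟩ for some r, s, t ∈ G satisfying r + (r + s) = s, r + (r + t) = t, and (r + s) + (r + t) = s + t; (iii) M = ⟨r, s, t⟩ and M' = ⟨r + s, r + t, s + t⟩ for some r, s, t ∈ G satisfying (r + s) + (r + t) = r, (r + s) + (s + t) = s, and (r + t) + (s + t) = t. -/
import Mathlib


/-- The multiset ⟨m 1, …, m n⟩ determined by a tuple. -/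
def msOfFn {G : Type*} {n : ℕ} (m : Fin n → G) : Multiset G := (List.ofFn m : List G)

/-- The card M_{i,j} of the multiset ⟨m 1, …, m n⟩ (for a commutative groupoid
operation `op`): replace the two entries at positions `i` and `j` by their sum. -/
def mcard {G : Type*} (op : G → G → G) {n : ℕ} (m : Fin n → G) (i j : Fin n) :
    Multiset G :=
  ((Finset.univ.filter (fun k : Fin n => k ≠ i ∧ k ≠ j)).val.map m) + {op (m i) (m j)}

/-- The deck of the multiset ⟨m 1, …, m n⟩: the multiset of all C(n,2) cards. -/
def mdeck {G : Type*} (op : G → G → G) {n : ℕ} (m : Fin n → G) :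
    Multiset (Multiset G) :=
  (Finset.univ.filter (fun p : Fin n × Fin n => p.1 < p.2)).val.map
    (fun p => mcard op m p.1 p.2)

theorem peq {α : Type*} {x y x' y' : α} :
    ({x, y} : Multiset α) = {x', y'} ↔ (x = x' ∧ y = y') ∨ (x = y' ∧ y = x') := by
  constructor
  · intro h
    rcases Multiset.cons_eq_cons.mp h with ⟨h1, h2⟩ | ⟨h1, cs, h2, h3⟩
    · exact Or.inl ⟨h1, by simpa using h2⟩
    · rcases Multiset.cons_eq_cons.mp h2 with ⟨e1, e2⟩ | ⟨e1, ds, e2, e3⟩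
      · subst e2
        have : y' = x := by simpa using h3
        exact Or.inr ⟨this.symm, e1⟩
      · exfalso
        have := congrArg Multiset.card e2
        simp at this
  · rintro (⟨rfl, rfl⟩ | ⟨rfl, rfl⟩)
    · rfl
    · exact Multiset.cons_swap _ _ _

theorem teq {α : Type*} {x y z x' y' z' : α} :
    ({x, y, z} : Multiset α) = {x', y', z'} ↔
      (x = x' ∧ ({y, z} : Multiset α) = {y', z'}) ∨
      (x = y' ∧ ({y, z} : Multiset α) = {x', z'}) ∨
      (x = z' ∧ ({y, z} : Multiset α) = {x', y'}) := by
  constructor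
  · intro h
    rcases Multiset.cons_eq_cons.mp h with ⟨h1, h2⟩ | ⟨h1, cs, h2, h3⟩
    · exact Or.inl ⟨h1, h2⟩
    · rcases Multiset.cons_eq_cons.mp h2 with ⟨e1, e2⟩ | ⟨e1, ds, e2, e3⟩
      · subst e2
        rcases peq.mp h3 with ⟨f1, f2⟩ | ⟨f1, f2⟩
        · exact Or.inr (Or.inl ⟨f1.symm, peq.mpr (Or.inl ⟨e1, f2.symm⟩)⟩)
        · exact Or.inr (Or.inr ⟨f2.symm, peq.mpr (Or.inl ⟨e1, f1.symm⟩)⟩)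
      · have hd : ds = 0 := by
          have := congrArg Multiset.card e2; simpa using this
        subst hd
        have hz : z = x' := by simpa using e2
        simp only [Multiset.cons_zero] at e3
        subst e3
        rcases peq.mp h3 with ⟨f1, f2⟩ | ⟨f1, f2⟩
        · exact Or.inr (Or.inl ⟨f1.symm, peq.mpr (Or.inr ⟨f2.symm, hz⟩)⟩)
        · exact Or.inr (Or.inr ⟨f2.symm, peq.mpr (Or.inr ⟨f1.symm, hz⟩)⟩)
  · rintro (⟨rfl, h⟩ | ⟨rfl, h⟩ | ⟨rfl, h⟩)
    · rw [show ({x,y,z} : Multiset α) = x ::ₘ {y,z} from rfl, h]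
      rfl
    · rw [show ({x,y,z} : Multiset α) = x ::ₘ {y,z} from rfl, h]
      exact Multiset.cons_swap _ _ _
    · rw [show ({x,y,z} : Multiset α) = x ::ₘ {y,z} from rfl, h]
      exact (Multiset.cons_swap x x' (y' ::ₘ 0)).trans
        (congrArg (x' ::ₘ ·) (Multiset.cons_swap x y' 0))

/-- The deck of a concrete triple. -/
def D {G : Type*} (op : G → G → G) (a b c : G) : Multiset (Multiset G) :=
  {{c, op a b}, {b, op a c}, {a, op b c}}

theorem mdeck_eq_D {G : Type*} (op : G → G → G) (m : Fin 3 → G) :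
    mdeck op m = D op (m 0) (m 1) (m 2) := rfl

theorem msOfFn_eq {G : Type*} (m : Fin 3 → G) :
    msOfFn m = {m 0, m 1, m 2} := rfl

/-- The deck only depends on the underlying multiset. -/
theorem deckcong {G : Type*} (op : G → G → G) (hcomm : ∀ a b : G, op a b = op b a)
    {a b c a' b' c' : G} (h : ({a, b, c} : Multiset G) = {a', b', c'}) :
    D op a b c = D op a' b' c' := by
  rw [teq] at h
  simp only [peq] at h
  unfold D
  rcases h with ⟨h1, (⟨h2, h3⟩ | ⟨h2, h3⟩)⟩ | ⟨h1, (⟨h2, h3⟩ | ⟨h2, h3⟩)⟩ |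
    ⟨h1, (⟨h2, h3⟩ | ⟨h2, h3⟩)⟩ <;> subst h1 <;> subst h2 <;> subst h3 <;>
    rw [teq] <;> simp only [peq] <;> simp [hcomm]

/-- The forward direction, on explicit triples. -/
theorem key {G : Type*} (op : G → G → G) (hcomm : ∀ a b : G, op a b = op b a)
    (a b c a' b' c' : G) (H : D op a b c = D op a' b' c') :
    ({a, b, c} : Multiset G) = {a', b', c'} ∨
    (∃ r s t : G, ({a, b, c} : Multiset G) = {r, s, t} ∧
      ({a', b', c'} : Multiset G) = {r, op r s, op r t} ∧
      op r (op r s) = s ∧ op r (op r t) = t ∧ op (op r s) (op r t) = op s t) ∨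
    (∃ r s t : G, ({a, b, c} : Multiset G) = {r, s, t} ∧
      ({a', b', c'} : Multiset G) = {op r s, op r t, op s t} ∧
      op (op r s) (op r t) = r ∧ op (op r s) (op s t) = s ∧
      op (op r t) (op s t) = t) := by
  unfold D at H
  rw [teq] at H
  rcases H with ⟨h1, H⟩ | ⟨h1, H⟩ | ⟨h1, H⟩ <;> rw [peq] at h1 H <;>
    rcases h1 with ⟨e1, e2⟩ | ⟨e1, e2⟩ <;> rcases H with ⟨H1, H2⟩ | ⟨H1, H2⟩ <;>
    rw [peq] at H1 H2 <;>
    rcases H1 with ⟨f1, f2⟩ | ⟨f1, f2⟩ <;> rcases H2 with ⟨g1, g2⟩ | ⟨g1, g2⟩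
  all_goals first
    | ((refine Or.inl ?_; rw [teq]; simp only [peq]; simp_all [hcomm]) <;> done)
    | ((refine Or.inr (Or.inl ⟨a, b, c, ?_, ?_, ?_, ?_, ?_⟩) <;>
        (try (rw [teq]; simp only [peq])) <;> simp_all [hcomm]) <;> done)
    | ((refine Or.inr (Or.inl ⟨b, a, c, ?_, ?_, ?_, ?_, ?_⟩) <;>
        (try (rw [teq]; simp only [peq])) <;> simp_all [hcomm]) <;> done)
    | ((refine Or.inr (Or.inl ⟨c, a, b, ?_, ?_, ?_, ?_, ?_⟩) <;>
        (try (rw [teq]; simp only [peq])) <;> simp_all [hcomm]) <;> done)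
    | ((refine Or.inr (Or.inr ⟨a, b, c, ?_, ?_, ?_, ?_, ?_⟩) <;>
        (try (rw [teq]; simp only [peq])) <;> simp_all [hcomm]) <;> done)

theorem caseii {G : Type*} (op : G → G → G)
    (r s t : G) (h3 : op r (op r s) = s) (h4 : op r (op r t) = t)
    (h5 : op (op r s) (op r t) = op s t) :
    D op r s t = D op r (op r s) (op r t) := by
  unfold D
  rw [h3, h4, h5]
  exact teq.mpr (Or.inr (Or.inl ⟨peq.mpr (Or.inr ⟨rfl, rfl⟩),
    peq.mpr (Or.inl ⟨peq.mpr (Or.inr ⟨rfl, rfl⟩), rfl⟩)⟩))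

theorem caseiii {G : Type*} (op : G → G → G)
    (r s t : G) (h3 : op (op r s) (op r t) = r) (h4 : op (op r s) (op s t) = s)
    (h5 : op (op r t) (op s t) = t) :
    D op r s t = D op (op r s) (op r t) (op s t) := by
  unfold D
  rw [h3, h4, h5]
  exact teq.mpr (Or.inr (Or.inr ⟨peq.mpr (Or.inr ⟨rfl, rfl⟩),
    peq.mpr (Or.inr ⟨peq.mpr (Or.inr ⟨rfl, rfl⟩), peq.mpr (Or.inr ⟨rfl, rfl⟩)⟩)⟩))

theorem stmt4 {G : Type*} (op : G → G → G)
    (hcomm : ∀ a b : G, op a b = op b a)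
    (m m' : Fin 3 → G) :
    mdeck op m = mdeck op m' ↔
      (msOfFn m = msOfFn m' ∨
        (∃ r s t : G,
          msOfFn m = {r, s, t} ∧ msOfFn m' = {r, op r s, op r t} ∧
          op r (op r s) = s ∧ op r (op r t) = t ∧
          op (op r s) (op r t) = op s t) ∨
        (∃ r s t : G,
          msOfFn m = {r, s, t} ∧ msOfFn m' = {op r s, op r t, op s t} ∧
          op (op r s) (op r t) = r ∧ op (op r s) (op s t) = s ∧
          op (op r t) (op s t) = t)) := by
  rw [mdeck_eq_D, mdeck_eq_D, msOfFn_eq, msOfFn_eq]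
  constructor
  · intro H
    exact key op hcomm _ _ _ _ _ _ H
  · rintro (h | ⟨r, s, t, h1, h2, h3, h4, h5⟩ | ⟨r, s, t, h1, h2, h3, h4, h5⟩)
    · exact deckcong op hcomm h
    · exact (deckcong op hcomm h1).trans
        ((caseii op r s t h3 h4 h5).trans (deckcong op hcomm h2).symm)
    · exact (deckcong op hcomm h1).trans
        ((caseiii op r s t h3 h4 h5).trans (deckcong op hcomm h2).symm)
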